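/- For the CFI gadget X_k and any subset T ⊆ {1,…,k} of even cardinality, there exists a color-preserving automorphism of X_k that flips exactly the pairs P_i with i ∈ T and fixes all other external pairs. -/

import Mathlib

open scoped Classical

/-- Even-weight binary strings of length `k`. -/
def EvenStr (k : ℕ) := {s : Fin k → Bool // Even ((Finset.univ.filter fun i => s i = true).card)}

instance (k : ℕ) : Fintype (EvenStr k) := by unfold EvenStr; infer_instance

/-- Vertices of the CFI gadget `X_k`: external pairs `P_i = {(i, false), (i, true)}`
and middle vertices given by even-weight strings. -/
def CFIV (k : ℕ) := (Fin k × Bool) ⊕ EvenStr k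

instance (k : ℕ) : Fintype (CFIV k) := by unfold CFIV; infer_instance

def CFIhalf (k : ℕ) : CFIV k → CFIV k → Prop
  | .inl (i, β), .inr s => s.1 i = β
  | _, _ => False

/-- The CFI gadget `X_k`: the middle vertex `s` is adjacent to `a_i = (i, false)`
if `s i = false` and to `b_i = (i, true)` if `s i = true`. -/
def CFI (k : ℕ) : SimpleGraph (CFIV k) where
  Adj x y := CFIhalf k x y ∨ CFIhalf k y x
  symm := ⟨fun x y h => h.symm⟩
  loopless := ⟨fun x h => by rcases h with h | h <;> rcases x with ⟨i, β⟩ | s <;> exact h⟩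

/-- Colors of `X_k`: pair `P_i` gets color `i`; all middle vertices get color `k`. -/
def CFIcolor (k : ℕ) : CFIV k → ℕ
  | .inl (i, _) => i
  | .inr _ => k

/-- `σ` flips the external pair `P_i`. -/
def CFIFlips (k : ℕ) (σ : CFIV k ≃ CFIV k) (i : Fin k) : Prop :=
  σ (.inl (i, false)) = .inl (i, true)

lemma even_iff_zmod (n : ℕ) : Even n ↔ ((n : ZMod 2) = 0) := by
  rw [Nat.even_iff, ← Nat.dvd_iff_mod_eq_zero, ← ZMod.natCast_eq_zero_iff]

lemma even_card_xor {k : ℕ} (s t : Fin k → Bool)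
    (hs : Even ((Finset.univ.filter fun i => s i = true).card))
    (ht : Even ((Finset.univ.filter fun i => t i = true).card)) :
    Even ((Finset.univ.filter fun i => xor (s i) (t i) = true).card) := by
  have key : ∀ (f : Fin k → Bool),
      (((Finset.univ.filter fun i => f i = true).card : ZMod 2))
        = ∑ i : Fin k, (if f i = true then 1 else 0 : ZMod 2) := by
    intro f
    rw [Finset.card_filter]
    push_cast
    rfl
  rw [even_iff_zmod] at hs ht ⊢
  rw [key] at hs ht ⊢
  have : ∀ i : Fin k, (if xor (s i) (t i) = true then 1 else 0 : ZMod 2)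
      = (if s i = true then 1 else 0) + (if t i = true then 1 else 0) := by
    intro i; cases hsi : s i <;> cases hti : t i <;> simp <;> decide
  rw [Finset.sum_congr rfl fun i _ => this i, Finset.sum_add_distrib, hs, ht, add_zero]

/-- For every even-cardinality set `T` of indices there is a color-preserving
automorphism of the CFI gadget `X_k` flipping exactly the pairs `P_i` with `i ∈ T`
and fixing all other external pairs. -/
theorem CFI_exists_flip_automorphism (k : ℕ) (T : Finset (Fin k)) (hT : Even T.card) :
    ∃ σ : CFIV k ≃ CFIV k,
      (∀ x y, (CFI k).Adj x y ↔ (CFI k).Adj (σ x) (σ y)) ∧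
      (∀ v, CFIcolor k (σ v) = CFIcolor k v) ∧
      (∀ (i : Fin k) (β : Bool),
        σ (.inl (i, β)) = .inl (i, if i ∈ T then !β else β)) := by
  set t : Fin k → Bool := fun i => decide (i ∈ T) with ht_def
  have htcard : Even ((Finset.univ.filter fun i => t i = true).card) := by
    have : (Finset.univ.filter fun i => t i = true) = T := by
      ext i; simp [ht_def]
    rwa [this]
  set f : CFIV k → CFIV k := fun v =>
    match v with
    | .inl (i, β) => .inl (i, xor β (t i))
    | .inr s => .inr ⟨fun i => xor (s.1 i) (t i), even_card_xor s.1 t s.2 htcard⟩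
    with hf
  have hinv : Function.Involutive f := by
    rintro (⟨i, β⟩ | ⟨s, hs⟩)
    · simp only [hf, Bool.xor_assoc, Bool.xor_self, Bool.xor_false]; rfl
    · exact congrArg Sum.inr (Subtype.ext (funext fun i => by simp [Bool.xor_assoc]))
  refine ⟨hinv.toPerm, ?_, ?_, ?_⟩
  · rintro (⟨i, β⟩ | ⟨s, hs⟩) (⟨j, γ⟩ | ⟨u, hu⟩) <;>
      simp only [CFI, CFIhalf, Function.Involutive.coe_toPerm, hf] <;>
      constructor <;> rintro (h | h) <;> first
        | exact Or.inl (by cases hti : t i <;> simp_all)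
        | exact Or.inr (by cases htj : t j <;> simp_all)
        | exact h.elim
  · rintro (⟨i, β⟩ | s) <;> rfl
  · intro i β
    simp only [Function.Involutive.coe_toPerm, hf, Sum.inl.injEq, Prod.mk.injEq, true_and]
    by_cases h : i ∈ T <;> cases β <;> simp [ht_def, h] <;> rfl
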